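/- Let σ > 0 and θ0 ∈ ℝ. In the balanced parametric empirical Bayes setting, the strength of evidence function V(x), equal to 1 for |x−θ0| ≤ σ and Λ((1/σ)√((x−θ0)²−σ²)·sign(x−θ0)) for |x−θ0| ≥ σ, is nondecreasing on ℝ, strictly increasing on [θ0+σ, ∞) and on (−∞, θ0−σ], satisfies V(x)·V(2θ0−x) = 1 for all x, V(x) > 1 for x > θ0+σ, and V(x) < 1 for x < θ0−σ. -/
import Mathlib


/-- The standard normal density. -/
noncomputable def stdNormalPDF (t : ℝ) : ℝ := Real.exp (-t ^ 2 / 2) / Real.sqrt (2 * Real.pi)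

/-- The standard normal cumulative distribution function. -/
noncomputable def stdNormalCDF (y : ℝ) : ℝ := ∫ t in Set.Iic y, stdNormalPDF t

/-- The odds transform `Λ(y) = Φ(y)/Φ(−y)`. -/
noncomputable def Lambda (y : ℝ) : ℝ := stdNormalCDF y / stdNormalCDF (-y)

open MeasureTheory Real Set

lemma pdf_pos (t : ℝ) : 0 < stdNormalPDF t := by
  unfold stdNormalPDF
  positivity

lemma pdf_eq (t : ℝ) : stdNormalPDF t = Real.exp (-(1/2) * t ^ 2) / Real.sqrt (2 * Real.pi) := by
  unfold stdNormalPDF; ring_nf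

lemma pdf_integrable : Integrable stdNormalPDF := by
  have h := (integrable_exp_neg_mul_sq (by norm_num : (0:ℝ) < 1/2)).div_const (Real.sqrt (2*Real.pi))
  have e : stdNormalPDF = fun x => Real.exp (-(1/2) * x ^ 2) / Real.sqrt (2*Real.pi) := funext pdf_eq
  rw [e]; exact h

lemma pdf_integral_total : ∫ t, stdNormalPDF t = 1 := by
  have h := integral_gaussian (1/2 : ℝ)
  have hs : Real.sqrt (Real.pi / (1/2)) = Real.sqrt (2 * Real.pi) := by
    norm_num; ring_nf
  simp only [pdf_eq]
  rw [integral_div, h, hs, div_self (by positivity)]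

lemma cdf_strictMono : StrictMono stdNormalCDF := by
  intro a b hab
  have h : stdNormalCDF b - stdNormalCDF a = ∫ t in a..b, stdNormalPDF t := by
    unfold stdNormalCDF
    exact intervalIntegral.integral_Iic_sub_Iic pdf_integrable.integrableOn pdf_integrable.integrableOn
  have hpos : 0 < ∫ t in a..b, stdNormalPDF t :=
    intervalIntegral.intervalIntegral_pos_of_pos
      pdf_integrable.intervalIntegrable pdf_pos hab
  linarith

lemma cdf_pos (y : ℝ) : 0 < stdNormalCDF y := by
  have h0 : 0 ≤ stdNormalCDF (y - 1) :=
    setIntegral_nonneg measurableSet_Iic (fun t _ => (pdf_pos t).le)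
  have := cdf_strictMono (show y - 1 < y by linarith)
  linarith

lemma cdf_add_neg (y : ℝ) : stdNormalCDF y + stdNormalCDF (-y) = 1 := by
  have hsym : ∀ t : ℝ, stdNormalPDF (-t) = stdNormalPDF t := by
    intro t; unfold stdNormalPDF; rw [neg_pow]; ring_nf
  have h1 : stdNormalCDF (-y) = ∫ t in Ioi y, stdNormalPDF t := by
    unfold stdNormalCDF
    rw [← integral_comp_neg_Ioi]
    simp_rw [hsym]
  rw [h1]
  unfold stdNormalCDF
  rw [intervalIntegral.integral_Iic_add_Ioi pdf_integrable.integrableOn pdf_integrable.integrableOn,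
    pdf_integral_total]

lemma cdf_lt_one (y : ℝ) : stdNormalCDF y < 1 := by
  have := cdf_pos (-y); have := cdf_add_neg y; linarith

lemma Lambda_strictMono : StrictMono Lambda := by
  intro a b hab
  unfold Lambda
  have h1 : stdNormalCDF a < stdNormalCDF b := cdf_strictMono hab
  have h2 : stdNormalCDF (-b) < stdNormalCDF (-a) := cdf_strictMono (by linarith)
  rw [div_lt_div_iff₀ (cdf_pos (-a)) (cdf_pos (-b))]
  nlinarith [cdf_pos a, cdf_pos (-a), cdf_pos (-b)]

lemma Lambda_zero : Lambda 0 = 1 := by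
  unfold Lambda; rw [neg_zero, div_self (cdf_pos 0).ne']

lemma Lambda_mul_neg (y : ℝ) : Lambda y * Lambda (-y) = 1 := by
  unfold Lambda
  rw [neg_neg, div_mul_div_comm, mul_comm (stdNormalCDF (-y))]
  exact div_self (mul_pos (cdf_pos y) (cdf_pos (-y))).ne'

/-- Properties of the balanced parametric empirical Bayes strength of evidence:
`V` is nondecreasing, strictly increasing on `[θ0+σ, ∞)` and on `(−∞, θ0−σ]`,
satisfies `V(x)·V(2θ0−x) = 1`, and `V(x) > 1` for `x > θ0+σ`, `V(x) < 1` for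
`x < θ0−σ`. -/
theorem balanced_strength_of_evidence_properties
    (σ θ0 : ℝ) (hσ : 0 < σ) :
    let V : ℝ → ℝ := fun x => if |x - θ0| ≤ σ then 1
      else Lambda ((1 / σ) * Real.sqrt ((x - θ0) ^ 2 - σ ^ 2) * Real.sign (x - θ0))
    Monotone V ∧
    StrictMonoOn V (Set.Ici (θ0 + σ)) ∧
    StrictMonoOn V (Set.Iic (θ0 - σ)) ∧
    (∀ x : ℝ, V x * V (2 * θ0 - x) = 1) ∧
    (∀ x : ℝ, θ0 + σ < x → 1 < V x) ∧
    (∀ x : ℝ, x < θ0 - σ → V x < 1) := by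
  intro V
  set g : ℝ → ℝ := fun x => (1 / σ) * Real.sqrt ((x - θ0) ^ 2 - σ ^ 2) * Real.sign (x - θ0)
    with hg
  have hVg : ∀ x, V x = Lambda (g x) := by
    intro x
    by_cases h : |x - θ0| ≤ σ
    · have h2 : (x - θ0) ^ 2 - σ ^ 2 ≤ 0 := by
        have h3 := sq_abs (x - θ0)
        nlinarith [abs_nonneg (x - θ0)]
      have hz : Real.sqrt ((x - θ0) ^ 2 - σ ^ 2) = 0 := Real.sqrt_eq_zero'.mpr h2
      simp only [V, h, if_pos, hg, hz, mul_zero, zero_mul, Lambda_zero]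
    · simp only [V, h, if_neg, hg, not_false_iff]
  -- sign helpers
  have hle0 : ∀ x : ℝ, x - θ0 ≤ σ → g x ≤ 0 := by
    intro x hx
    rcases le_or_gt (x - θ0) 0 with h0 | h0
    · have hs : Real.sign (x - θ0) ≤ 0 := by
        rcases h0.lt_or_eq with h | h
        · rw [Real.sign_of_neg h]; norm_num
        · rw [h, Real.sign_zero]
      have hnn : 0 ≤ (1 / σ) * Real.sqrt ((x - θ0) ^ 2 - σ ^ 2) := by positivity
      simpa [hg] using mul_nonpos_of_nonneg_of_nonpos hnn hs
    · have hz : Real.sqrt ((x - θ0) ^ 2 - σ ^ 2) = 0 :=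
        Real.sqrt_eq_zero'.mpr (by nlinarith)
      simp [hg, hz]
  have hge0 : ∀ x : ℝ, -σ ≤ x - θ0 → 0 ≤ g x := by
    intro x hx
    rcases le_or_gt 0 (x - θ0) with h0 | h0
    · have hs : 0 ≤ Real.sign (x - θ0) := by
        rcases h0.lt_or_eq with h | h
        · rw [Real.sign_of_pos h]; norm_num
        · rw [← h, Real.sign_zero]
      have hnn : 0 ≤ (1 / σ) * Real.sqrt ((x - θ0) ^ 2 - σ ^ 2) := by positivity
      simpa [hg] using mul_nonneg hnn hs
    · have hz : Real.sqrt ((x - θ0) ^ 2 - σ ^ 2) = 0 :=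
        Real.sqrt_eq_zero'.mpr (by nlinarith)
      simp [hg, hz]
  have hgmono : Monotone g := by
    intro a b hab
    by_cases hu : σ ≤ a - θ0
    · have hv : σ ≤ b - θ0 := by linarith
      have hsa : Real.sign (a - θ0) = 1 := Real.sign_of_pos (by linarith)
      have hsb : Real.sign (b - θ0) = 1 := Real.sign_of_pos (by linarith)
      have hsq : Real.sqrt ((a - θ0) ^ 2 - σ ^ 2) ≤ Real.sqrt ((b - θ0) ^ 2 - σ ^ 2) :=
        Real.sqrt_le_sqrt (by nlinarith)
      simp only [hg, hsa, hsb, mul_one]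
      exact mul_le_mul_of_nonneg_left hsq (by positivity)
    · by_cases hv : b - θ0 ≤ -σ
      · have hu2 : a - θ0 ≤ -σ := by linarith
        have hsa : Real.sign (a - θ0) = -1 := Real.sign_of_neg (by linarith)
        have hsb : Real.sign (b - θ0) = -1 := Real.sign_of_neg (by linarith)
        have hsq : Real.sqrt ((b - θ0) ^ 2 - σ ^ 2) ≤ Real.sqrt ((a - θ0) ^ 2 - σ ^ 2) :=
          Real.sqrt_le_sqrt (by nlinarith)
        simp only [hg, hsa, hsb, mul_neg_one]
        exact neg_le_neg (mul_le_mul_of_nonneg_left hsq (by positivity))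
      · exact le_trans (hle0 a (by linarith)) (hge0 b (by linarith))
  have hstrictIci : StrictMonoOn g (Set.Ici (θ0 + σ)) := by
    intro a ha b hb hab
    simp only [Set.mem_Ici] at ha hb
    have hsa : Real.sign (a - θ0) = 1 := Real.sign_of_pos (by linarith)
    have hsb : Real.sign (b - θ0) = 1 := Real.sign_of_pos (by linarith)
    have hsq : Real.sqrt ((a - θ0) ^ 2 - σ ^ 2) < Real.sqrt ((b - θ0) ^ 2 - σ ^ 2) :=
      Real.sqrt_lt_sqrt (by nlinarith) (by nlinarith)
    simp only [hg, hsa, hsb, mul_one]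
    exact mul_lt_mul_of_pos_left hsq (by positivity)
  have hstrictIic : StrictMonoOn g (Set.Iic (θ0 - σ)) := by
    intro a ha b hb hab
    simp only [Set.mem_Iic] at ha hb
    have hsa : Real.sign (a - θ0) = -1 := Real.sign_of_neg (by linarith)
    have hsb : Real.sign (b - θ0) = -1 := Real.sign_of_neg (by linarith)
    have hsq : Real.sqrt ((b - θ0) ^ 2 - σ ^ 2) < Real.sqrt ((a - θ0) ^ 2 - σ ^ 2) :=
      Real.sqrt_lt_sqrt (by nlinarith) (by nlinarith)
    simp only [hg, hsa, hsb, mul_neg_one]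
    exact neg_lt_neg (mul_lt_mul_of_pos_left hsq (by positivity))
  have hgneg : ∀ x : ℝ, g (2 * θ0 - x) = -g x := by
    intro x
    have he : 2 * θ0 - x - θ0 = -(x - θ0) := by ring
    simp only [hg, he, neg_sq, Real.sign_neg]
    ring
  refine ⟨?_, ?_, ?_, ?_, ?_, ?_⟩
  · intro a b hab
    rw [hVg, hVg]
    exact Lambda_strictMono.monotone (hgmono hab)
  · intro a ha b hb hab
    rw [hVg, hVg]
    exact Lambda_strictMono (hstrictIci ha hb hab)
  · intro a ha b hb hab
    rw [hVg, hVg]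
    exact Lambda_strictMono (hstrictIic ha hb hab)
  · intro x
    rw [hVg, hVg, hgneg]
    exact Lambda_mul_neg (g x)
  · intro x hx
    rw [hVg]
    have hgpos : 0 < g x := by
      have hs : Real.sign (x - θ0) = 1 := Real.sign_of_pos (by linarith)
      have hsq : 0 < Real.sqrt ((x - θ0) ^ 2 - σ ^ 2) :=
        Real.sqrt_pos.mpr (by nlinarith)
      simp only [hg, hs, mul_one]
      positivity
    calc 1 = Lambda 0 := Lambda_zero.symm
      _ < Lambda (g x) := Lambda_strictMono hgpos
  · intro x hx
    rw [hVg]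
    have hgneg' : g x < 0 := by
      have hs : Real.sign (x - θ0) = -1 := Real.sign_of_neg (by linarith)
      have hsq : 0 < Real.sqrt ((x - θ0) ^ 2 - σ ^ 2) :=
        Real.sqrt_pos.mpr (by nlinarith)
      simp only [hg, hs, mul_neg_one]
      have : 0 < (1 / σ) * Real.sqrt ((x - θ0) ^ 2 - σ ^ 2) := by positivity
      linarith
    calc Lambda (g x) < Lambda 0 := Lambda_strictMono hgneg'
      _ = 1 := Lambda_zero
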